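/- For all integers N and r with 2 ≤ r ≤ N, a_{0,r}(N+1,x) = (x)_r · (−1)^{N−r+1} · N! · H_{N,r−1}. -/

import Mathlib

open Finset

/-- Generalized harmonic numbers `H_{N,j}`: `H_{N,0} = 1`,
`H_{N,1} = 1 + 1/2 + ⋯ + 1/N`, and `H_{N,j} = ∑_{l=j}^{N} H_{l-1,j-1}/l` for `j ≥ 2`. -/
def genHarmonic : ℕ → ℕ → ℚ
  | _, 0 => 1
  | N, 1 => ∑ i ∈ Finset.range N, (1 : ℚ) / (i + 1)
  | N, (j+2) => ∑ l ∈ Finset.Icc (j+2) N, genHarmonic (l-1) (j+1) / l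
termination_by N j => j

/-- Falling factorial `(x)_n = x(x-1)⋯(x-n+1)`, with `(x)_0 = 1`. -/
noncomputable def fallingFactorial (x : ℝ) (n : ℕ) : ℝ := ∏ i ∈ Finset.range n, (x - i)

/-- The coefficients `a_{i,j}(N, x)` arising from repeated differentiation of the
λ-Changhee generating function: `a_{0,0}(N,x) = 0`, `a_{1,0}(1,x) = -1`, `a_{0,1}(1,x) = x`,
and for `N ≥ 1`, `i, j ≥ 0` with `1 ≤ i + j ≤ N + 1`,
`a_{i,j}(N+1,x) = -N·a_{i,j}(N,x) - i·a_{i-1,j}(N,x) + (x - j + 1)·a_{i,j-1}(N,x)`,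
with the convention that `a_{i,j}(N,x) = 0` whenever `i < 0`, `j < 0`, or `i + j > N`. -/
noncomputable def aCh : ℕ → ℤ → ℤ → ℝ → ℝ
  | 0, _, _, _ => 0
  | 1, i, j, x => if i = 1 ∧ j = 0 then -1 else if i = 0 ∧ j = 1 then x else 0
  | (N+2), i, j, x =>
      if 0 ≤ i ∧ 0 ≤ j ∧ 1 ≤ i + j ∧ i + j ≤ N + 2 then
        -(N+1 : ℝ) * aCh (N+1) i j x - (i : ℝ) * aCh (N+1) (i-1) j x
          + (x - (j : ℝ) + 1) * aCh (N+1) i (j-1) x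
      else 0

lemma gh_zero (N : ℕ) : genHarmonic N 0 = 1 := by rw [genHarmonic]
lemma gh_one (N : ℕ) : genHarmonic N 1 = ∑ i ∈ Finset.range N, (1 : ℚ) / (i + 1) := by rw [genHarmonic]
lemma gh_two (N j : ℕ) : genHarmonic N (j+2) = ∑ l ∈ Finset.Icc (j+2) N, genHarmonic (l-1) (j+1) / l := by rw [genHarmonic]

lemma aCh_big (N : ℕ) (i j : ℤ) (x : ℝ) (h : (N:ℤ) < i + j) : aCh N i j x = 0 := by
  match N with
  | 0 => rfl
  | 1 =>
    simp only [aCh]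
    split_ifs with h1 h2
    · omega
    · omega
    · rfl
  | (N+2) =>
    simp only [aCh]
    rw [if_neg]
    omega

lemma aCh_zz (N : ℕ) (x : ℝ) : aCh N 0 0 x = 0 := by
  match N with
  | 0 => rfl
  | 1 => simp [aCh]
  | (N+2) => simp only [aCh]; rw [if_neg]; omega

lemma ff_succ (x : ℝ) (n : ℕ) : fallingFactorial x (n+1) = fallingFactorial x n * (x - n) := by
  simp [fallingFactorial, Finset.prod_range_succ]

lemma aCh_diag (N : ℕ) (x : ℝ) : aCh (N+1) 0 ((N:ℤ)+1) x = fallingFactorial x (N+1) := by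
  induction N with
  | zero => simp [aCh, fallingFactorial]
  | succ n ih =>
    show aCh (n+2) 0 ((n:ℤ)+1+1) x = _
    simp only [aCh]
    rw [if_pos (by omega)]
    rw [aCh_big (n+1) 0 ((n:ℤ)+1+1) x (by omega)]
    have : ((n:ℤ)+1+1-1) = (n:ℤ)+1 := by ring
    rw [this, ih]
    conv_rhs => rw [ff_succ x (n+1)]
    push_cast
    ring

lemma gh_diag (n : ℕ) : genHarmonic n n = 1 / (Nat.factorial n : ℚ) := by
  induction n with
  | zero => simp [gh_zero]
  | succ k ih =>
    match k, ih with
    | 0, _ => rw [gh_one]; simp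
    | (m+1), ih =>
      rw [gh_two]
      rw [Finset.Icc_self, Finset.sum_singleton]
      have h1 : (m+1+1) - 1 = m+1 := rfl
      rw [h1, ih]
      have h3 : ((Nat.factorial (m+2) : ℚ)) = (m+2) * (Nat.factorial (m+1) : ℚ) := by
        rw [Nat.factorial_succ]; push_cast; ring
      have h2 : (Nat.factorial (m+1) : ℚ) ≠ 0 := by positivity
      rw [h3]
      field_simp
      push_cast
      ring

lemma gh_succ (N j : ℕ) (h1 : 1 ≤ j) (h2 : j ≤ N+1) :
    genHarmonic (N+1) j = genHarmonic N j + genHarmonic N (j-1) / (N+1) := by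
  match j, h1 with
  | 1, _ =>
    rw [gh_one, gh_one, Finset.sum_range_succ, gh_zero]
  | (k+2), _ =>
    rw [gh_two, gh_two]
    rw [Finset.sum_Icc_succ_top (by omega : k+2 ≤ N+1)]
    push_cast
    ring

lemma key (N : ℕ) (hN : 1 ≤ N) : ∀ r : ℕ, 1 ≤ r → r ≤ N → ∀ x : ℝ,
    aCh (N+1) 0 (r:ℤ) x = fallingFactorial x r * (-1:ℝ)^(N-r+1) * (Nat.factorial N : ℝ) *
      (genHarmonic N (r-1) : ℝ) := by
  induction N, hN using Nat.le_induction with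
  | base =>
    intro r h1 h2 x
    interval_cases r
    norm_num [aCh, fallingFactorial, gh_zero]
  | succ N hN IH =>
    intro r h1 h2 x
    show aCh (N+2) 0 (r:ℤ) x = _
    simp only [aCh]
    rw [if_pos (by omega : (0:ℤ) ≤ 0 ∧ (0:ℤ) ≤ (r:ℤ) ∧ 1 ≤ (0:ℤ) + (r:ℤ) ∧ (0:ℤ) + (r:ℤ) ≤ (N:ℤ) + 2)]
    rcases eq_or_lt_of_le h2 with hr | hr
    · -- r = N + 1 (diagonal case)
      subst hr
      push_cast
      rw [aCh_diag N x]
      rw [show ((N:ℤ)+1-1) = (N:ℤ) from by ring]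
      rw [IH N (by omega) (le_refl N) x]
      rw [show N - N + 1 = 1 from by omega]
      rw [gh_succ N N (by omega) (by omega), gh_diag]
      rw [ff_succ x N, Nat.factorial_succ]
      have hf : (Nat.factorial N : ℝ) ≠ 0 := by positivity
      have hn : (N:ℝ) + 1 ≠ 0 := by positivity
      push_cast
      field_simp
      ring
    · have hrN : r ≤ N := by omega
      rcases eq_or_lt_of_le h1 with hr1 | hr1
      · -- r = 1
        subst hr1
        rw [show ((1:ℕ):ℤ) - 1 = 0 from by norm_num]
        rw [aCh_zz, IH 1 le_rfl (by omega) x]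
        rw [show N - 1 + 1 = N from by omega]
        rw [show (N+1) - 1 + 1 = N+1 from by omega]
        rw [gh_zero, gh_zero, pow_succ, Nat.factorial_succ]
        push_cast
        ring
      · -- 2 ≤ r
        have hIH1 := IH r (by omega) hrN x
        have hIH2 := IH (r-1) (by omega) (by omega) x
        rw [show ((r:ℤ) - 1) = ((r-1:ℕ):ℤ) from by omega]
        rw [hIH1, hIH2]
        rw [show N-(r-1)+1 = (N-r+1)+1 from by omega]
        rw [show (N+1)-r+1 = (N-r+1)+1 from by omega]
        rw [gh_succ N (r-1) (by omega) (by omega)]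
        have hff : fallingFactorial x r = fallingFactorial x (r-1) * (x - ((r-1:ℕ):ℝ)) := by
          conv_lhs => rw [show r = (r-1)+1 from by omega, ff_succ]
        rw [hff, pow_succ, Nat.factorial_succ]
        have hn : (N:ℝ) + 1 ≠ 0 := by positivity
        push_cast [Nat.cast_sub (by omega : 1 ≤ r)]
        field_simp
        ring

/-- For `2 ≤ r ≤ N`, `a_{0,r}(N+1,x) = (x)_r · (-1)^{N-r+1} · N! · H_{N,r-1}`. -/
theorem aCh_zero_r (N r : ℕ) (hr1 : 2 ≤ r) (hr2 : r ≤ N) (x : ℝ) :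
    aCh (N + 1) 0 (r : ℤ) x
      = fallingFactorial x r * (-1 : ℝ) ^ (N - r + 1) * (Nat.factorial N : ℝ) *
          (genHarmonic N (r - 1) : ℝ) := by
  exact key N (by omega) r (by omega) hr2 x
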